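/- arXiv:2105.10017 — 2 statements merged into one kernel-verified Lean document; each statement's English description precedes it below -/
import Mathlib

section
/- Under the single 2d-change-point model, let τ_w, τ̂_h be integers with τ⁰_w ≤ τ_w ≤ T_w and τ⁰_h ≤ τ̂_h ≤ T_h, let θ̂_{(1)},…,θ̂_{(4)} ∈ ℝ^p be arbitrary vectors, and set η̂_{(1)}=θ̂_{(2)}−θ̂_{(1)} and η̂_{(3)}=θ̂_{(3)}−θ̂_{(4)}. Then the following algebraic identity holds: U_w(τ_w,τ̂_h,θ̂) = (τ_w−τ⁰_w)·[(T_h−τ⁰_h)·(‖η̂_{(1)}‖₂² + 2(θ̂_{(1)}−θ⁰_{(1)})ᵀη̂_{(1)}) + τ⁰_h·(‖η̂_{(3)}‖₂² + 2(θ̂_{(4)}−θ⁰_{(4)})ᵀη̂_{(3)})] + (τ_w−τ⁰_w)(τ̂_h−τ⁰_h)·[‖η̂_{(3)}‖₂² − ‖η̂_{(1)}‖₂² − 2(θ̂_{(1)}−θ⁰_{(1)})ᵀη̂_{(1)} + 2(θ̂_{(4)}−θ⁰_{(1)})ᵀη̂_{(3)}] − 2Σ_{w=τ⁰_w+1}^{τ_w}Σ_{h=τ⁰_h+1}^{T_h}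 ε_{(w,h)}ᵀη̂_{(1)} − 2Σ_{w=τ⁰_w+1}^{τ_w}Σ_{h=1}^{τ⁰_h} ε_{(w,h)}ᵀη̂_{(3)} + 2Σ_{w=τ⁰_w+1}^{τ_w}Σ_{h=τ⁰_h+1}^{τ̂_h} ε_{(w,h)}ᵀη̂_{(1)} − 2Σ_{w=τ⁰_w+1}^{τ_w}Σ_{h=τ⁰_h+1}^{τ̂_h} ε_{(w,h)}ᵀη̂_{(3)}. -/
open MeasureTheory ProbabilityTheory Real
open scoped RealInnerProductSpace

noncomputable section

/-- `p`-dimensional Euclidean space. -/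
abbrev Vec (p : ℕ) := EuclideanSpace ℝ (Fin p)

/-- Quadrant index of the grid point `z` relative to the split point `τ`;
`0 ↔ Q₁`, `1 ↔ Q₂`, `2 ↔ Q₃`, `3 ↔ Q₄`. -/
def quadIdx (τ z : ℕ × ℕ) : Fin 4 :=
  if τ.1 < z.1 then (if τ.2 < z.2 then 0 else 3) else (if τ.2 < z.2 then 1 else 2)

/-- The sampling grid `{1,…,T_w} × {1,…,T_h}`. -/
def sgrid (Tw Th : ℕ) : Finset (ℕ × ℕ) := Finset.Icc 1 Tw ×ˢ Finset.Icc 1 Th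

/-- The `j`-th quadrant `Q_j(τ)` of the grid. -/
def quadSet (Tw Th : ℕ) (τ : ℕ × ℕ) (j : Fin 4) : Finset (ℕ × ℕ) :=
  (sgrid Tw Th).filter fun z => quadIdx τ z = j

/-- The squared loss `L(τ_w, τ_h, θ)`. -/
def sqLoss (Tw Th : ℕ) {p : ℕ} (x : ℕ × ℕ → Vec p) (τw τh : ℕ) (θ : Fin 4 → Vec p) : ℝ :=
  ((Tw : ℝ) * Th)⁻¹ * ∑ z ∈ sgrid Tw Th, ‖x z - θ (quadIdx (τw, τh) z)‖ ^ 2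

/-- `U_w(τ_w, τ_h, θ) = T_wT_h (L(τ_w,τ_h,θ) - L(τ⁰_w,τ_h,θ))`. -/
def Uw (Tw Th : ℕ) {p : ℕ} (x : ℕ × ℕ → Vec p) (τ0w τw τh : ℕ) (θ : Fin 4 → Vec p) : ℝ :=
  (Tw : ℝ) * Th * (sqLoss Tw Th x τw τh θ - sqLoss Tw Th x τ0w τh θ)

/-- `U_h(τ_w, τ_h, θ) = T_wT_h (L(τ_w,τ_h,θ) - L(τ_w,τ⁰_h,θ))`. -/
def Uh (Tw Th : ℕ) {p : ℕ} (x : ℕ × ℕ → Vec p) (τ0h τw τh : ℕ) (θ : Fin 4 → Vec p) : ℝ :=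
  (Tw : ℝ) * Th * (sqLoss Tw Th x τw τh θ - sqLoss Tw Th x τw τ0h θ)

/-- The jump vectors `η_{(1)},…,η_{(4)}` (0-indexed). -/
def jumpVec {p : ℕ} (θ0 : Fin 4 → Vec p) : Fin 4 → Vec p :=
  ![θ0 1 - θ0 0, θ0 2 - θ0 1, θ0 2 - θ0 3, θ0 0 - θ0 3]

/-- The width-wise proportion weighted squared jump size `ξ_w²`. -/
def xiSqW {p : ℕ} (Th τ0h : ℕ) (θ0 : Fin 4 → Vec p) : ℝ :=
  ((Th : ℝ) - τ0h) / Th * ‖jumpVec θ0 0‖ ^ 2 + (1 - ((Th : ℝ) - τ0h) / Th) * ‖jumpVec θ0 2‖ ^ 2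

/-- The height-wise proportion weighted squared jump size `ξ_h²`. -/
def xiSqH {p : ℕ} (Tw τ0w : ℕ) (θ0 : Fin 4 → Vec p) : ℝ :=
  ((Tw : ℝ) - τ0w) / Tw * ‖jumpVec θ0 3‖ ^ 2 + (1 - ((Tw : ℝ) - τ0w) / Tw) * ‖jumpVec θ0 1‖ ^ 2

/-- `ξ_min = ξ_w ∧ ξ_h`. -/
def xiMin {p : ℕ} (Tw Th τ0w τ0h : ℕ) (θ0 : Fin 4 → Vec p) : ℝ :=
  min (Real.sqrt (xiSqW Th τ0h θ0)) (Real.sqrt (xiSqH Tw τ0w θ0))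

/-- `ξ̄ = max_j ξ_j`. -/
def xiBar {p : ℕ} (θ0 : Fin 4 → Vec p) : ℝ :=
  max (max ‖jumpVec θ0 0‖ ‖jumpVec θ0 1‖) (max ‖jumpVec θ0 2‖ ‖jumpVec θ0 3‖)

/-- The support `S_j` of a mean vector. -/
def suppSet {p : ℕ} (v : Vec p) : Finset (Fin p) := Finset.univ.filter fun k => v k ≠ 0

/-- The sparsity parameter `s = max_j |S_j|`. -/
def sVal {p : ℕ} (θ0 : Fin 4 → Vec p) : ℕ :=
  max (max (suppSet (θ0 0)).card (suppSet (θ0 1)).card)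
    (max (suppSet (θ0 2)).card (suppSet (θ0 3)).card)

/-- The `ℓ₁` norm on `ℝ^p`. -/
def l1 {p : ℕ} (v : Vec p) : ℝ := ∑ k, |v k|

/-- The `ℓ₁` norm of the components of `v` in the index set `S`. -/
def l1On {p : ℕ} (v : Vec p) (S : Finset (Fin p)) : ℝ := ∑ k ∈ S, |v k|

/-- The supremum norm on `ℝ^p`. -/
def linf {p : ℕ} (v : Vec p) : ℝ := ⨆ k, |v k|

/-- `ψ = max_j ‖η⁰_{(j)}‖_∞`. -/
def psiMax {p : ℕ} (θ0 : Fin 4 → Vec p) : ℝ :=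
  max (max (linf (jumpVec θ0 0)) (linf (jumpVec θ0 1)))
    (max (linf (jumpVec θ0 2)) (linf (jumpVec θ0 3)))

/-- The collection `G_w(u, v)` of width candidates. -/
def Gw (Tw τ0w : ℕ) (u v : ℝ) : Finset ℕ :=
  (Finset.Icc 1 Tw).filter fun t =>
    (Tw : ℝ) * v ≤ |(t : ℝ) - τ0w| ∧ |(t : ℝ) - τ0w| ≤ (Tw : ℝ) * u

/-- The collection `G_h(u, v)` of height candidates. -/
def Gh (Th τ0h : ℕ) (u v : ℝ) : Finset ℕ :=
  (Finset.Icc 1 Th).filter fun t =>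
    (Th : ℝ) * v ≤ |(t : ℝ) - τ0h| ∧ |(t : ℝ) - τ0h| ≤ (Th : ℝ) * u

/-- `log (p ∨ T_wT_h)`. -/
def logPT (Tw Th p : ℕ) : ℝ := Real.log (max (p : ℝ) ((Tw : ℝ) * Th))

/-- Observations from the single 2d-change-point model, for a fixed sample point `ω`. -/
def obsOf {Ω : Type*} {p : ℕ} (τ0 : ℕ × ℕ) (θ0 : Fin 4 → Vec p) (ε : ℕ × ℕ → Ω → Vec p)
    (ω : Ω) : ℕ × ℕ → Vec p :=
  fun z => θ0 (quadIdx τ0 z) + ε z ω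

/-- Quadrant-wise sample mean `x̄_{(j)}(τ)`. -/
def qmean (Tw Th : ℕ) {p : ℕ} (x : ℕ × ℕ → Vec p) (τ : ℕ × ℕ) (j : Fin 4) : Vec p :=
  (((quadSet Tw Th τ j).card : ℝ))⁻¹ • ∑ z ∈ quadSet Tw Th τ j, x z

/-- A real random variable is subexponential with variance proxy `σ²`. -/
def IsSubE {Ω : Type*} [MeasureSpace Ω] (X : Ω → ℝ) (σ : ℝ) : Prop :=
  (∫ ω, X ω) = 0 ∧
    ∀ t : ℝ, |t| ≤ 1 / σ → (∫ ω, Real.exp (t * X ω)) ≤ Real.exp (t ^ 2 * σ ^ 2 / 2)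

/-- A random vector is subexponential with variance proxy `σ²`. -/
def IsSubEVec {Ω : Type*} [MeasureSpace Ω] {p : ℕ} (X : Ω → Vec p) (σ : ℝ) : Prop :=
  ∀ v : Vec p, ‖v‖ = 1 → IsSubE (fun ω => ⟪X ω, v⟫) σ

/-- Condition A: the noise vectors are i.i.d. subexponential with variance proxy `σ²`. -/
def CondA {Ω : Type*} [MeasureSpace Ω] (Tw Th : ℕ) {p : ℕ}
    (ε : ℕ × ℕ → Ω → Vec p) (σ : ℝ) : Prop :=
  (∀ z, Measurable (ε z)) ∧
  iIndepFun
    (fun z : {z : ℕ × ℕ // z ∈ sgrid Tw Th} => ε z.1) volume ∧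
  (∀ z ∈ sgrid Tw Th, IdentDistrib (ε z) (ε (1, 1)) volume volume) ∧
  (∀ z ∈ sgrid Tw Th, IsSubEVec (ε z) σ)

/-- Condition B(i): the covariance has eigenvalues bounded in `[κ², φ²]`
(expressed through the quadratic form). -/
def CondB1 {Ω : Type*} [MeasureSpace Ω] {p : ℕ}
    (ε : ℕ × ℕ → Ω → Vec p) (κ φ : ℝ) : Prop :=
  0 < κ ∧ κ ≤ φ ∧
  ∀ v : Vec p,
    κ ^ 2 * ‖v‖ ^ 2 ≤ (∫ ω, ⟪ε (1, 1) ω, v⟫ ^ 2) ∧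
    (∫ ω, ⟪ε (1, 1) ω, v⟫ ^ 2) ≤ φ ^ 2 * ‖v‖ ^ 2

/-- Condition B(ii): each quadrant of the true change point contains at least
`T_wT_h ω̲` observations. -/
def CondB2 (Tw Th : ℕ) (τ0 : ℕ × ℕ) (ωl : ℝ) : Prop :=
  ∀ j : Fin 4, (Tw : ℝ) * Th * ωl ≤ ((quadSet Tw Th τ0 j).card : ℝ)

end
lemma key_sub {p : ℕ} (x a b : Vec p) :
    ‖x - b‖ ^ 2 - ‖x - a‖ ^ 2 = ‖b‖ ^ 2 - ‖a‖ ^ 2 - 2 * ⟪x, b - a⟫ := by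
  rw [norm_sub_sq_real, norm_sub_sq_real, inner_sub_right]; ring

lemma key_bracket {p : ℕ} (a b c : Vec p) :
    ‖b - a‖ ^ 2 + 2 * ⟪a - c, b - a⟫ = ‖b‖ ^ 2 - ‖a‖ ^ 2 - 2 * ⟪c, b - a⟫ := by
  rw [norm_sub_sq_real, inner_sub_left, inner_sub_right, inner_sub_right,
    real_inner_self_eq_norm_sq, real_inner_comm b a]; ring

lemma icc_eq_ioc (a m : ℕ) : Finset.Icc (a+1) m = Finset.Ioc a m := by
  ext k; simp [Finset.mem_Icc, Finset.mem_Ioc]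

/-- The algebraic decomposition (Equation (2) / Remark A.2) of `U_w(τ_w, τ̂_h, θ̂)`. -/
theorem Uw_algebraic_decomposition
    (Tw Th p τ0w τ0h τw τhh : ℕ)
    (θ0 θh : Fin 4 → Vec p) (ε : ℕ × ℕ → Vec p)
    (hTw : 0 < Tw) (hTh : 0 < Th)
    (h0w : 1 ≤ τ0w) (h0h : 1 ≤ τ0h)
    (hw1 : τ0w ≤ τw) (hw2 : τw ≤ Tw)
    (hh1 : τ0h ≤ τhh) (hh2 : τhh ≤ Th) :
    Uw Tw Th (fun z => θ0 (quadIdx (τ0w, τ0h) z) + ε z) τ0w τw τhh θh =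
      ((τw : ℝ) - τ0w) *
          (((Th : ℝ) - τ0h) *
              (‖θh 1 - θh 0‖ ^ 2 + 2 * ⟪θh 0 - θ0 0, θh 1 - θh 0⟫) +
            (τ0h : ℝ) *
              (‖θh 2 - θh 3‖ ^ 2 + 2 * ⟪θh 3 - θ0 3, θh 2 - θh 3⟫)) +
        ((τw : ℝ) - τ0w) * ((τhh : ℝ) - τ0h) *
          (‖θh 2 - θh 3‖ ^ 2 - ‖θh 1 - θh 0‖ ^ 2 -
            2 * ⟪θh 0 - θ0 0, θh 1 - θh 0⟫ + 2 * ⟪θh 3 - θ0 0, θh 2 - θh 3⟫) -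
        2 * ∑ w ∈ Finset.Icc (τ0w + 1) τw, ∑ h ∈ Finset.Icc (τ0h + 1) Th,
            ⟪ε (w, h), θh 1 - θh 0⟫ -
        2 * ∑ w ∈ Finset.Icc (τ0w + 1) τw, ∑ h ∈ Finset.Icc 1 τ0h,
            ⟪ε (w, h), θh 2 - θh 3⟫ +
        2 * ∑ w ∈ Finset.Icc (τ0w + 1) τw, ∑ h ∈ Finset.Icc (τ0h + 1) τhh,
            ⟪ε (w, h), θh 1 - θh 0⟫ -
        2 * ∑ w ∈ Finset.Icc (τ0w + 1) τw, ∑ h ∈ Finset.Icc (τ0h + 1) τhh,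
            ⟪ε (w, h), θh 2 - θh 3⟫ := by
  have h1 : (0:ℝ) < Tw := by exact_mod_cast hTw
  have h2 : (0:ℝ) < Th := by exact_mod_cast hTh
  have hcast : ((Tw:ℝ) * Th) ≠ 0 := by positivity
  have hA : Uw Tw Th (fun z => θ0 (quadIdx (τ0w, τ0h) z) + ε z) τ0w τw τhh θh
      = ∑ w ∈ Finset.Icc 1 Tw, ∑ h ∈ Finset.Icc 1 Th,
          (‖θ0 (quadIdx (τ0w, τ0h) (w, h)) + ε (w, h) - θh (quadIdx (τw, τhh) (w, h))‖ ^ 2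
            - ‖θ0 (quadIdx (τ0w, τ0h) (w, h)) + ε (w, h) - θh (quadIdx (τ0w, τhh) (w, h))‖ ^ 2) := by
    simp only [Uw, sqLoss, sgrid]
    rw [← mul_sub, ← mul_assoc, mul_inv_cancel₀ hcast, one_mul, ← Finset.sum_sub_distrib,
      Finset.sum_product]
  have hB : (∑ w ∈ Finset.Icc 1 Tw, ∑ h ∈ Finset.Icc 1 Th,
          (‖θ0 (quadIdx (τ0w, τ0h) (w, h)) + ε (w, h) - θh (quadIdx (τw, τhh) (w, h))‖ ^ 2
            - ‖θ0 (quadIdx (τ0w, τ0h) (w, h)) + ε (w, h) - θh (quadIdx (τ0w, τhh) (w, h))‖ ^ 2))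
      = ∑ w ∈ Finset.Icc (τ0w + 1) τw, ∑ h ∈ Finset.Icc 1 Th,
          (‖θ0 (quadIdx (τ0w, τ0h) (w, h)) + ε (w, h) - θh (quadIdx (τw, τhh) (w, h))‖ ^ 2
            - ‖θ0 (quadIdx (τ0w, τ0h) (w, h)) + ε (w, h) - θh (quadIdx (τ0w, τhh) (w, h))‖ ^ 2) := by
    refine (Finset.sum_subset (Finset.Icc_subset_Icc (by omega) (by omega)) ?_).symm
    intro w hw hw'
    simp only [Finset.mem_Icc] at hw hw'
    push_neg at hw'
    refine Finset.sum_eq_zero fun h _ => ?_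
    have hq : quadIdx (τw, τhh) (w, h) = quadIdx (τ0w, τhh) (w, h) := by
      show (if τw < w then (if τhh < h then (0 : Fin 4) else 3) else (if τhh < h then 1 else 2))
          = (if τ0w < w then (if τhh < h then (0 : Fin 4) else 3) else (if τhh < h then 1 else 2))
      rcases le_or_gt w τ0w with hle | hlt
      · rw [if_neg (show ¬ τw < w by omega), if_neg (show ¬ τ0w < w by omega)]
      · rw [if_pos (show τw < w by omega), if_pos (show τ0w < w by omega)]
    rw [hq, sub_self]
  have hC : ∀ w ∈ Finset.Icc (τ0w + 1) τw,
      (∑ h ∈ Finset.Icc 1 Th,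
          (‖θ0 (quadIdx (τ0w, τ0h) (w, h)) + ε (w, h) - θh (quadIdx (τw, τhh) (w, h))‖ ^ 2
            - ‖θ0 (quadIdx (τ0w, τ0h) (w, h)) + ε (w, h) - θh (quadIdx (τ0w, τhh) (w, h))‖ ^ 2))
      = ((τ0h : ℝ) * (‖θh 2‖ ^ 2 - ‖θh 3‖ ^ 2 - 2 * ⟪θ0 3, θh 2 - θh 3⟫)
          + ((τhh : ℝ) - τ0h) * (‖θh 2‖ ^ 2 - ‖θh 3‖ ^ 2 - 2 * ⟪θ0 0, θh 2 - θh 3⟫)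
          + ((Th : ℝ) - τhh) * (‖θh 1‖ ^ 2 - ‖θh 0‖ ^ 2 - 2 * ⟪θ0 0, θh 1 - θh 0⟫))
        - 2 * ∑ h ∈ Finset.Icc 1 τ0h, ⟪ε (w, h), θh 2 - θh 3⟫
        - 2 * ∑ h ∈ Finset.Icc (τ0h + 1) τhh, ⟪ε (w, h), θh 2 - θh 3⟫
        - 2 * ∑ h ∈ Finset.Icc (τhh + 1) Th, ⟪ε (w, h), θh 1 - θh 0⟫ := by
    intro w hw
    simp only [Finset.mem_Icc] at hw
    have hnw : ¬ τw < w := by omega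
    have hpw : τ0w < w := by omega
    have hsum3 : ∀ f : ℕ → ℝ,
        ∑ h ∈ Finset.Icc 1 Th, f h
          = ∑ h ∈ Finset.Icc 1 τ0h, f h + ∑ h ∈ Finset.Icc (τ0h + 1) τhh, f h
            + ∑ h ∈ Finset.Icc (τhh + 1) Th, f h := by
      intro f
      rw [show Finset.Icc 1 Th = Finset.Ioc 0 Th from icc_eq_ioc 0 Th,
        show Finset.Icc 1 τ0h = Finset.Ioc 0 τ0h from icc_eq_ioc 0 τ0h,
        icc_eq_ioc, icc_eq_ioc,
        Finset.sum_Ioc_consecutive f (Nat.zero_le τ0h) hh1,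
        Finset.sum_Ioc_consecutive f (Nat.zero_le τhh) hh2]
    rw [hsum3]
    have p1 : ∑ h ∈ Finset.Icc 1 τ0h,
        (‖θ0 (quadIdx (τ0w, τ0h) (w, h)) + ε (w, h) - θh (quadIdx (τw, τhh) (w, h))‖ ^ 2
          - ‖θ0 (quadIdx (τ0w, τ0h) (w, h)) + ε (w, h) - θh (quadIdx (τ0w, τhh) (w, h))‖ ^ 2)
        = ∑ h ∈ Finset.Icc 1 τ0h,
            ((‖θh 2‖ ^ 2 - ‖θh 3‖ ^ 2 - 2 * ⟪θ0 3, θh 2 - θh 3⟫) - 2 * ⟪ε (w, h), θh 2 - θh 3⟫) := by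
      refine Finset.sum_congr rfl fun h hh => ?_
      simp only [Finset.mem_Icc] at hh
      have e1 : quadIdx (τw, τhh) (w, h) = 2 := by
        show (if τw < w then (if τhh < h then (0:Fin 4) else 3) else (if τhh < h then 1 else 2)) = 2
        rw [if_neg hnw, if_neg (show ¬ τhh < h by omega)]
      have e2 : quadIdx (τ0w, τhh) (w, h) = 3 := by
        show (if τ0w < w then (if τhh < h then (0:Fin 4) else 3) else (if τhh < h then 1 else 2)) = 3
        rw [if_pos hpw, if_neg (show ¬ τhh < h by omega)]
      have e3 : quadIdx (τ0w, τ0h) (w, h) = 3 := by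
        show (if τ0w < w then (if τ0h < h then (0:Fin 4) else 3) else (if τ0h < h then 1 else 2)) = 3
        rw [if_pos hpw, if_neg (show ¬ τ0h < h by omega)]
      rw [e1, e2, e3, key_sub, inner_add_left]; ring
    have p2 : ∑ h ∈ Finset.Icc (τ0h + 1) τhh,
        (‖θ0 (quadIdx (τ0w, τ0h) (w, h)) + ε (w, h) - θh (quadIdx (τw, τhh) (w, h))‖ ^ 2
          - ‖θ0 (quadIdx (τ0w, τ0h) (w, h)) + ε (w, h) - θh (quadIdx (τ0w, τhh) (w, h))‖ ^ 2)
        = ∑ h ∈ Finset.Icc (τ0h + 1) τhh,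
            ((‖θh 2‖ ^ 2 - ‖θh 3‖ ^ 2 - 2 * ⟪θ0 0, θh 2 - θh 3⟫) - 2 * ⟪ε (w, h), θh 2 - θh 3⟫) := by
      refine Finset.sum_congr rfl fun h hh => ?_
      simp only [Finset.mem_Icc] at hh
      have e1 : quadIdx (τw, τhh) (w, h) = 2 := by
        show (if τw < w then (if τhh < h then (0:Fin 4) else 3) else (if τhh < h then 1 else 2)) = 2
        rw [if_neg hnw, if_neg (show ¬ τhh < h by omega)]
      have e2 : quadIdx (τ0w, τhh) (w, h) = 3 := by
        show (if τ0w < w then (if τhh < h then (0:Fin 4) else 3) else (if τhh < h then 1 else 2)) = 3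
        rw [if_pos hpw, if_neg (show ¬ τhh < h by omega)]
      have e3 : quadIdx (τ0w, τ0h) (w, h) = 0 := by
        show (if τ0w < w then (if τ0h < h then (0:Fin 4) else 3) else (if τ0h < h then 1 else 2)) = 0
        rw [if_pos hpw, if_pos (show τ0h < h by omega)]
      rw [e1, e2, e3, key_sub, inner_add_left]; ring
    have p3 : ∑ h ∈ Finset.Icc (τhh + 1) Th,
        (‖θ0 (quadIdx (τ0w, τ0h) (w, h)) + ε (w, h) - θh (quadIdx (τw, τhh) (w, h))‖ ^ 2
          - ‖θ0 (quadIdx (τ0w, τ0h) (w, h)) + ε (w, h) - θh (quadIdx (τ0w, τhh) (w, h))‖ ^ 2)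
        = ∑ h ∈ Finset.Icc (τhh + 1) Th,
            ((‖θh 1‖ ^ 2 - ‖θh 0‖ ^ 2 - 2 * ⟪θ0 0, θh 1 - θh 0⟫) - 2 * ⟪ε (w, h), θh 1 - θh 0⟫) := by
      refine Finset.sum_congr rfl fun h hh => ?_
      simp only [Finset.mem_Icc] at hh
      have e1 : quadIdx (τw, τhh) (w, h) = 1 := by
        show (if τw < w then (if τhh < h then (0:Fin 4) else 3) else (if τhh < h then 1 else 2)) = 1
        rw [if_neg hnw, if_pos (show τhh < h by omega)]
      have e2 : quadIdx (τ0w, τhh) (w, h) = 0 := by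
        show (if τ0w < w then (if τhh < h then (0:Fin 4) else 3) else (if τhh < h then 1 else 2)) = 0
        rw [if_pos hpw, if_pos (show τhh < h by omega)]
      have e3 : quadIdx (τ0w, τ0h) (w, h) = 0 := by
        show (if τ0w < w then (if τ0h < h then (0:Fin 4) else 3) else (if τ0h < h then 1 else 2)) = 0
        rw [if_pos hpw, if_pos (show τ0h < h by omega)]
      rw [e1, e2, e3, key_sub, inner_add_left]; ring
    rw [p1, p2, p3]
    simp only [Finset.sum_sub_distrib, Finset.sum_const, nsmul_eq_mul, Nat.card_Icc,
      ← Finset.mul_sum]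
    rw [show τ0h + 1 - 1 = τ0h by omega, show τhh + 1 - (τ0h + 1) = τhh - τ0h by omega,
      show Th + 1 - (τhh + 1) = Th - τhh by omega, Nat.cast_sub hh1, Nat.cast_sub hh2]
    ring
  rw [hA, hB, Finset.sum_congr rfl hC]
  simp only [Finset.sum_sub_distrib, Finset.sum_const, nsmul_eq_mul, Nat.card_Icc,
    ← Finset.mul_sum]
  rw [show τw + 1 - (τ0w + 1) = τw - τ0w by omega, Nat.cast_sub hw1]
  have hsplit2 : (∑ w ∈ Finset.Icc (τ0w + 1) τw, ∑ h ∈ Finset.Icc (τ0h + 1) Th,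
        ⟪ε (w, h), θh 1 - θh 0⟫)
      = (∑ w ∈ Finset.Icc (τ0w + 1) τw, ∑ h ∈ Finset.Icc (τ0h + 1) τhh,
          ⟪ε (w, h), θh 1 - θh 0⟫)
        + ∑ w ∈ Finset.Icc (τ0w + 1) τw, ∑ h ∈ Finset.Icc (τhh + 1) Th,
            ⟪ε (w, h), θh 1 - θh 0⟫ := by
    rw [← Finset.sum_add_distrib]
    refine Finset.sum_congr rfl fun w _ => ?_
    rw [icc_eq_ioc, icc_eq_ioc, icc_eq_ioc,
      Finset.sum_Ioc_consecutive _ hh1 hh2]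
  have e1 := key_bracket (θh 0) (θh 1) (θ0 0)
  have e3a := key_bracket (θh 3) (θh 2) (θ0 3)
  have e3b := key_bracket (θh 3) (θh 2) (θ0 0)
  linear_combination (2 : ℝ) * hsplit2
    - (((τw:ℝ) - τ0w) * ((Th:ℝ) - τ0h) - ((τw:ℝ) - τ0w) * ((τhh:ℝ) - τ0h)) * e1
    - ((τw:ℝ) - τ0w) * (τ0h:ℝ) * e3a
    - ((τw:ℝ) - τ0w) * ((τhh:ℝ) - τ0h) * e3b
end

section
/- Under the single 2d-change-point model, for any integer τ*_w with τ⁰_w < τ*_w ≤ T_w, evaluating the loss at the true height change point and true means gives the deterministic identity T_wT_h·(L(τ⁰_w,τ⁰_h,θ⁰) − L(τ*_w,τ⁰_h,θ⁰)) = 2·Σ_{w=τ⁰_w+1}^{τ*_w} [Σ_{h=τ⁰_h+1}^{T_h} ε_{(w,h)}ᵀη⁰_{(1)} + Σ_{h=1}^{τ⁰_h} ε_{(w,h)}ᵀη⁰_{(3)}] − (τ*_w − τ⁰_w)·T_h·ξ_w². -/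
open MeasureTheory ProbabilityTheory Real
open scoped RealInnerProductSpace

/-- The decomposition (Equation (39)) of the criterion at the true height change point
and true means. -/
theorem Cw_decomposition_at_true_parameters
    (Tw Th p τ0w τ0h τstar : ℕ)
    (θ0 : Fin 4 → Vec p) (ε : ℕ × ℕ → Vec p)
    (hTw : 0 < Tw) (hTh : 0 < Th)
    (h0w : 1 ≤ τ0w) (h0h : 1 ≤ τ0h) (h0hT : τ0h ≤ Th)
    (hs1 : τ0w < τstar) (hs2 : τstar ≤ Tw) :
    (Tw : ℝ) * Th *
        (sqLoss Tw Th (fun z => θ0 (quadIdx (τ0w, τ0h) z) + ε z) τ0w τ0h θ0 -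
          sqLoss Tw Th (fun z => θ0 (quadIdx (τ0w, τ0h) z) + ε z) τstar τ0h θ0) =
      2 * ∑ w ∈ Finset.Icc (τ0w + 1) τstar,
          ((∑ h ∈ Finset.Icc (τ0h + 1) Th, ⟪ε (w, h), jumpVec θ0 0⟫) +
            ∑ h ∈ Finset.Icc 1 τ0h, ⟪ε (w, h), jumpVec θ0 2⟫) -
        ((τstar : ℝ) - τ0w) * Th * xiSqW Th τ0h θ0 := by

  have hTh0 : (Th : ℝ) ≠ 0 := Nat.cast_ne_zero.mpr hTh.ne'
  have hTw0 : (Tw : ℝ) ≠ 0 := Nat.cast_ne_zero.mpr hTw.ne'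
  have hc0 : ((Tw : ℝ) * Th) ≠ 0 := mul_ne_zero hTw0 hTh0
  set x : ℕ × ℕ → Vec p := fun z => θ0 (quadIdx (τ0w, τ0h) z) + ε z with hx
  set η1 : Vec p := jumpVec θ0 0 with hη1
  set η3 : Vec p := jumpVec θ0 2 with hη3
  set D : ℕ × ℕ → ℝ := fun z =>
    if τ0h < z.2 then 2 * ⟪ε z, η1⟫ - ‖η1‖ ^ 2 else 2 * ⟪ε z, η3⟫ - ‖η3‖ ^ 2 with hD
  have hη1' : η1 = θ0 1 - θ0 0 := by simp [hη1, jumpVec]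
  have hη3' : η3 = θ0 2 - θ0 3 := by simp [hη3, jumpVec]
  have key : ∀ z ∈ sgrid Tw Th,
      ‖x z - θ0 (quadIdx (τ0w, τ0h) z)‖ ^ 2 - ‖x z - θ0 (quadIdx (τstar, τ0h) z)‖ ^ 2 =
      if z.1 ∈ Finset.Icc (τ0w + 1) τstar then D z else 0 := by
    rintro ⟨w, h⟩ _
    by_cases hw1 : τ0w < w
    · by_cases hw2 : w ≤ τstar
      · have hmem : w ∈ Finset.Icc (τ0w + 1) τstar := Finset.mem_Icc.mpr ⟨hw1, hw2⟩
        have hns : ¬ τstar < w := not_lt.mpr hw2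
        rw [if_pos hmem]
        by_cases hh : τ0h < h
        · have e1 : x (w, h) - θ0 (quadIdx (τ0w, τ0h) (w, h)) = ε (w, h) := by
            simp [hx]
          have e2 : x (w, h) - θ0 (quadIdx (τstar, τ0h) (w, h)) = ε (w, h) - η1 := by
            simp only [hx, quadIdx, hw1, hh, hns, if_true, if_false]
            rw [hη1']; abel
          rw [e1, e2, norm_sub_sq_real, hD]
          simp only [hh, if_pos]
          ring
        · have e1 : x (w, h) - θ0 (quadIdx (τ0w, τ0h) (w, h)) = ε (w, h) := by
            simp [hx]
          have e2 : x (w, h) - θ0 (quadIdx (τstar, τ0h) (w, h)) = ε (w, h) - η3 := by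
            simp only [hx, quadIdx, hw1, hh, hns, if_true, if_false]
            rw [hη3']; abel
          rw [e1, e2, norm_sub_sq_real, hD]
          simp only [hh, if_neg, if_false]
          ring
      · have hmem : w ∉ Finset.Icc (τ0w + 1) τstar := by
          simp [Finset.mem_Icc]; omega
        have hsame : quadIdx (τstar, τ0h) (w, h) = quadIdx (τ0w, τ0h) (w, h) := by
          simp only [quadIdx]; simp only [show τstar < w by omega, hw1, if_true]
        rw [if_neg hmem, hsame, sub_self]
    · have hmem : w ∉ Finset.Icc (τ0w + 1) τstar := by
        simp [Finset.mem_Icc]; omega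
      have hsame : quadIdx (τstar, τ0h) (w, h) = quadIdx (τ0w, τ0h) (w, h) := by
        simp only [quadIdx]
        simp only [show ¬ τstar < w by omega, hw1, if_false]
      rw [if_neg hmem, hsame, sub_self]
  have step1 : (Tw : ℝ) * Th * (sqLoss Tw Th x τ0w τ0h θ0 - sqLoss Tw Th x τstar τ0h θ0)
      = ∑ z ∈ sgrid Tw Th,
        (‖x z - θ0 (quadIdx (τ0w, τ0h) z)‖ ^ 2 - ‖x z - θ0 (quadIdx (τstar, τ0h) z)‖ ^ 2) := by
    rw [sqLoss, sqLoss, ← mul_sub, mul_inv_cancel_left₀ hc0, Finset.sum_sub_distrib]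
  rw [step1, Finset.sum_congr rfl key]
  have hfilter : (sgrid Tw Th).filter (fun z => z.1 ∈ Finset.Icc (τ0w + 1) τstar)
      = Finset.Icc (τ0w + 1) τstar ×ˢ Finset.Icc 1 Th := by
    ext ⟨w, h⟩
    simp only [sgrid, Finset.mem_filter, Finset.mem_product, Finset.mem_Icc]
    omega
  rw [← Finset.sum_filter, hfilter, Finset.sum_product]
  have hsplit : ∀ w, ∑ h ∈ Finset.Icc 1 Th, D (w, h) =
      (∑ h ∈ Finset.Icc (τ0h + 1) Th, (2 * ⟪ε (w, h), η1⟫ - ‖η1‖ ^ 2)) +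
      ∑ h ∈ Finset.Icc 1 τ0h, (2 * ⟪ε (w, h), η3⟫ - ‖η3‖ ^ 2) := by
    intro w
    have h1 : Finset.Icc 1 Th = Finset.Ioc 0 Th := by
      rw [← Finset.Icc_add_one_left_eq_Ioc, zero_add]
    have h2 : Finset.Icc 1 τ0h = Finset.Ioc 0 τ0h := by
      rw [← Finset.Icc_add_one_left_eq_Ioc, zero_add]
    have h3 : Finset.Icc (τ0h + 1) Th = Finset.Ioc τ0h Th := Finset.Icc_add_one_left_eq_Ioc _ _
    rw [h1, h2, h3, ← Finset.sum_Ioc_consecutive _ (Nat.zero_le τ0h) h0hT, add_comm]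
    congr 1
    · exact Finset.sum_congr rfl fun h hm => by
        have := (Finset.mem_Ioc.mp hm).1
        simp [hD, this]
    · exact Finset.sum_congr rfl fun h hm => by
        have := (Finset.mem_Ioc.mp hm).2
        simp [hD, not_lt.mpr this]
  rw [Finset.sum_congr rfl fun w _ => hsplit w]
  have c1 : ((Finset.Icc (τ0h + 1) Th).card : ℝ) = (Th : ℝ) - τ0h := by
    rw [Nat.card_Icc]
    rw [show Th + 1 - (τ0h + 1) = Th - τ0h by omega, Nat.cast_sub h0hT]
  have c2 : ((Finset.Icc 1 τ0h).card : ℝ) = (τ0h : ℝ) := by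
    rw [Nat.card_Icc]; simp
  have c3 : ((Finset.Icc (τ0w + 1) τstar).card : ℝ) = (τstar : ℝ) - τ0w := by
    rw [Nat.card_Icc]
    rw [show τstar + 1 - (τ0w + 1) = τstar - τ0w by omega, Nat.cast_sub hs1.le]
  simp only [Finset.sum_sub_distrib, Finset.sum_add_distrib, Finset.sum_const,
    nsmul_eq_mul, ← Finset.mul_sum, c1, c2, c3]
  rw [xiSqW, ← hη1, ← hη3]
  field_simp
  ring
end
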